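/- Let α ∈ (0,1) and β ∈ (1, 1+α) be real, and let λ be a nonzero complex number with arg(λ) ∈ (-πα, πα). Then ∫₀^∞ v^{2α-β} / (v^{2α} - 2λ v^α cos(απ) + λ²) dv = π λ^{(1-β)/α} sin(π(β - α + (1-β)/α)) / (α sin(πα) sin(π(β-1)/α)). -/

import Mathlib

open Real Set Filter MeasureTheory Complex

lemma exp_mul_I_re (θ : ℝ) : (Complex.exp (θ * I)).re = Real.cos θ := by
  rw [Complex.exp_mul_I]; simp [Complex.cos_ofReal_re]

lemma exp_mul_I_im (θ : ℝ) : (Complex.exp (θ * I)).im = Real.sin θ := by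
  rw [Complex.exp_mul_I]; simp [Complex.sin_ofReal_re]

lemma abs_sq_lower {θ c : ℝ} (hc : c ≤ Real.cos θ) {r z : ℝ} (hr : 0 ≤ r) (hz : 0 ≤ z) :
    (1 + min c 0) * (z ^ 2 + r ^ 2) ≤ ‖((z : ℂ) + (r : ℂ) * Complex.exp (θ * I))‖ ^ 2 := by
  rw [Complex.sq_norm, Complex.normSq_apply]
  simp only [Complex.add_re, Complex.add_im, Complex.ofReal_re, Complex.ofReal_im,
    Complex.mul_re, Complex.mul_im, exp_mul_I_re, exp_mul_I_im]
  have h1 := Real.sin_sq_add_cos_sq θ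
  rcases le_or_gt c 0 with h | h
  · rw [min_eq_left h]
    nlinarith [sq_nonneg (z - r), sq_nonneg (z + r), mul_nonneg hz hr, sq_nonneg (Real.sin θ)]
  · rw [min_eq_right h.le]
    nlinarith [mul_nonneg hz hr, sq_nonneg (Real.sin θ)]

/-- generic integrability criterion on `Ioi 0` -/
lemma integrableOn_of_bounds {E : Type*} [NormedAddCommGroup E] {f : ℝ → E}
    (meas : AEStronglyMeasurable f (volume.restrict (Ioi 0))) {a b C : ℝ}
    (ha : -1 < a) (hb : b < -1) (hC : 0 ≤ C)
    (h1 : ∀ z ∈ Ioc (0:ℝ) 1, ‖f z‖ ≤ C * z ^ a)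
    (h2 : ∀ z ∈ Ioi (1:ℝ), ‖f z‖ ≤ C * z ^ b) :
    IntegrableOn f (Ioi 0) := by
  have hsplit : Ioi (0:ℝ) = Ioc 0 1 ∪ Ioi 1 := (Ioc_union_Ioi_eq_Ioi zero_le_one).symm
  rw [hsplit]
  apply IntegrableOn.union
  · have hg : IntegrableOn (fun z : ℝ => C * z ^ a) (Ioc 0 1) := by
      exact ((intervalIntegral.intervalIntegrable_rpow' (a := 0) (b := 1) ha).1).const_mul C
    refine Integrable.mono' hg (meas.mono_set (by rw [hsplit]; exact subset_union_left)) ?_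
    filter_upwards [ae_restrict_mem measurableSet_Ioc] with z hz using h1 z hz
  · have hg : IntegrableOn (fun z : ℝ => C * z ^ b) (Ioi 1) :=
      (integrableOn_Ioi_rpow_of_lt hb one_pos).const_mul C
    refine Integrable.mono' hg (meas.mono_set (by rw [hsplit]; exact subset_union_right)) ?_
    filter_upwards [ae_restrict_mem measurableSet_Ioi] with z hz using h2 z hz
lemma sqrt_mul_le_abs {c₀ : ℝ} (hc₀ : 0 < c₀) {w : ℂ}
    (hw : ∀ z : ℝ, 0 ≤ z → c₀ * (z ^ 2 + 1) ≤ ‖((z : ℂ) + w)‖ ^ 2)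
    {z : ℝ} (hz : 0 ≤ z) :
    Real.sqrt c₀ * max z 1 ≤ ‖((z : ℂ) + w)‖ := by
  have h := hw z hz
  have h1 : (Real.sqrt c₀ * max z 1) ^ 2 ≤ ‖((z : ℂ) + w)‖ ^ 2 := by
    rw [mul_pow, Real.sq_sqrt hc₀.le]
    refine le_trans ?_ h
    rcases max_cases z 1 with ⟨hm, _⟩ | ⟨hm, _⟩ <;> rw [hm] <;> nlinarith
  have h2 : 0 ≤ Real.sqrt c₀ * max z 1 := by positivity
  calc Real.sqrt c₀ * max z 1 = Real.sqrt ((Real.sqrt c₀ * max z 1) ^ 2) := by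
        rw [Real.sqrt_sq h2]
    _ ≤ Real.sqrt (‖((z : ℂ) + w)‖ ^ 2) := Real.sqrt_le_sqrt h1
    _ = _ := Real.sqrt_sq (norm_nonneg _)

lemma denom_ne_zero {c₀ : ℝ} (hc₀ : 0 < c₀) {w : ℂ}
    (hw : ∀ z : ℝ, 0 ≤ z → c₀ * (z ^ 2 + 1) ≤ ‖((z : ℂ) + w)‖ ^ 2)
    {z : ℝ} (hz : 0 ≤ z) : (z : ℂ) + w ≠ 0 := by
  intro h
  have := sqrt_mul_le_abs hc₀ hw hz
  rw [h] at this
  simp only [norm_zero] at this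
  nlinarith [Real.sqrt_pos.2 hc₀, le_max_right z 1, this]

lemma meas_aux {c₀ : ℝ} (hc₀ : 0 < c₀) {w : ℂ}
    (hw : ∀ z : ℝ, 0 ≤ z → c₀ * (z ^ 2 + 1) ≤ ‖((z : ℂ) + w)‖ ^ 2) (a : ℝ) (n : ℕ) :
    AEStronglyMeasurable (fun z : ℝ => ((z ^ a : ℝ) : ℂ) / ((z : ℂ) + w) ^ n)
      (volume.restrict (Ioi 0)) := by
  refine ContinuousOn.aestronglyMeasurable ?_ measurableSet_Ioi
  apply ContinuousOn.div
  · exact Complex.continuous_ofReal.comp_continuousOn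
      (fun z hz => (Real.continuousAt_rpow_const z a (Or.inl (ne_of_gt hz))).continuousWithinAt)
  · exact ((Complex.continuous_ofReal.add continuous_const).pow n).continuousOn
  · intro z hz
    exact pow_ne_zero n (denom_ne_zero hc₀ hw (le_of_lt hz))

lemma norm_integrand (a : ℝ) (w : ℂ) (n : ℕ) {z : ℝ} (hz : 0 < z) :
    ‖((z ^ a : ℝ) : ℂ) / ((z : ℂ) + w) ^ n‖ = z ^ a / ‖((z : ℂ) + w)‖ ^ n := by
  rw [norm_div, norm_pow, Complex.norm_real, Real.norm_eq_abs,
    _root_.abs_of_nonneg (Real.rpow_nonneg hz.le a)]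

lemma integrableOn_one {a : ℝ} (ha : -1 < a) (ha' : a < 0) {c₀ : ℝ} (hc₀ : 0 < c₀) {w : ℂ}
    (hw : ∀ z : ℝ, 0 ≤ z → c₀ * (z ^ 2 + 1) ≤ ‖((z : ℂ) + w)‖ ^ 2) :
    IntegrableOn (fun z : ℝ => ((z ^ a : ℝ) : ℂ) / ((z : ℂ) + w)) (Ioi 0) := by
  have hs := Real.sqrt_pos.2 hc₀
  refine integrableOn_of_bounds (by simpa using meas_aux hc₀ hw a 1) ha
    (show a - 1 < -1 by linarith) (le_of_lt (inv_pos.2 hs)) (fun z hz => ?_) (fun z hz => ?_)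
  · have hz0 : 0 < z := hz.1
    have hn : ‖((z ^ a : ℝ) : ℂ) / ((z : ℂ) + w)‖ = z ^ a / ‖((z : ℂ) + w)‖ := by
      simpa using norm_integrand a w 1 hz0
    rw [hn]
    have hub : Real.sqrt c₀ ≤ ‖((z : ℂ) + w)‖ := by
      have := sqrt_mul_le_abs hc₀ hw hz0.le
      nlinarith [le_max_right z 1, hs]
    have habs : 0 < ‖((z : ℂ) + w)‖ := lt_of_lt_of_le hs hub
    rw [div_le_iff₀ habs]
    calc z ^ a = (Real.sqrt c₀)⁻¹ * z ^ a * Real.sqrt c₀ := by field_simp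
      _ ≤ (Real.sqrt c₀)⁻¹ * z ^ a * ‖((z : ℂ) + w)‖ :=
          mul_le_mul_of_nonneg_left hub (by positivity)
  · have hz1 : (1:ℝ) < z := hz
    have hz0 : 0 < z := lt_trans one_pos hz1
    have hn : ‖((z ^ a : ℝ) : ℂ) / ((z : ℂ) + w)‖ = z ^ a / ‖((z : ℂ) + w)‖ := by
      simpa using norm_integrand a w 1 hz0
    rw [hn]
    have hub : Real.sqrt c₀ * z ≤ ‖((z : ℂ) + w)‖ := by
      have := sqrt_mul_le_abs hc₀ hw hz0.le
      rwa [max_eq_left hz1.le] at this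
    have habs : 0 < ‖((z : ℂ) + w)‖ := lt_of_lt_of_le (by positivity) hub
    rw [div_le_iff₀ habs]
    calc z ^ a = (Real.sqrt c₀)⁻¹ * z ^ (a - 1) * (Real.sqrt c₀ * z) := by
          rw [Real.rpow_sub hz0]; field_simp; simp
      _ ≤ (Real.sqrt c₀)⁻¹ * z ^ (a - 1) * ‖((z : ℂ) + w)‖ :=
          mul_le_mul_of_nonneg_left hub (by positivity)

lemma integrableOn_sq {a : ℝ} (ha : -1 < a) (ha' : a < 1) {c₀ : ℝ} (hc₀ : 0 < c₀) {w : ℂ}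
    (hw : ∀ z : ℝ, 0 ≤ z → c₀ * (z ^ 2 + 1) ≤ ‖((z : ℂ) + w)‖ ^ 2) :
    IntegrableOn (fun z : ℝ => ((z ^ a : ℝ) : ℂ) / ((z : ℂ) + w) ^ 2) (Ioi 0) := by
  refine integrableOn_of_bounds (meas_aux hc₀ hw a 2) ha
    (show a - 2 < -1 by linarith) (le_of_lt (inv_pos.2 hc₀)) (fun z hz => ?_) (fun z hz => ?_)
  · have hz0 : 0 < z := hz.1
    rw [norm_integrand a w 2 hz0]
    have hub : c₀ ≤ ‖((z : ℂ) + w)‖ ^ 2 := by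
      have := hw z hz0.le; nlinarith [sq_nonneg z]
    rw [div_le_iff₀ (lt_of_lt_of_le hc₀ hub)]
    calc z ^ a = c₀⁻¹ * z ^ a * c₀ := by field_simp
      _ ≤ c₀⁻¹ * z ^ a * ‖((z : ℂ) + w)‖ ^ 2 :=
          mul_le_mul_of_nonneg_left hub (by positivity)
  · have hz1 : (1:ℝ) < z := hz
    have hz0 : 0 < z := lt_trans one_pos hz1
    rw [norm_integrand a w 2 hz0]
    have hub : c₀ * z ^ 2 ≤ ‖((z : ℂ) + w)‖ ^ 2 := by
      have := hw z hz0.le; nlinarith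
    have habs : 0 < ‖((z : ℂ) + w)‖ ^ 2 := lt_of_lt_of_le (by positivity) hub
    rw [div_le_iff₀ habs]
    calc z ^ a = c₀⁻¹ * z ^ (a - 2) * (c₀ * z ^ 2) := by
          have h2 : z ^ a = z ^ (a - 2) * z ^ (2:ℝ) := by
            rw [← Real.rpow_add hz0]; ring_nf
          rw [h2, Real.rpow_two]; field_simp
      _ ≤ c₀⁻¹ * z ^ (a - 2) * ‖((z : ℂ) + w)‖ ^ 2 :=
          mul_le_mul_of_nonneg_left hub (by positivity)

lemma integrable_bound {t : ℝ} (ht : 0 < t) (ht' : t < 1) {c₀ : ℝ} (hc₀ : 0 < c₀) :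
    IntegrableOn (fun z : ℝ => z ^ (t - 1) / (c₀ * (z ^ 2 + 1))) (Ioi 0) := by
  have meas : AEStronglyMeasurable (fun z : ℝ => z ^ (t - 1) / (c₀ * (z ^ 2 + 1)))
      (volume.restrict (Ioi 0)) := by
    refine ContinuousOn.aestronglyMeasurable (ContinuousOn.div ?_ ?_ ?_) measurableSet_Ioi
    · exact fun z hz => (Real.continuousAt_rpow_const z _ (Or.inl (ne_of_gt hz))).continuousWithinAt
    · fun_prop
    · intro z _; positivity
  refine integrableOn_of_bounds meas (show -1 < t - 1 by linarith)
    (show t - 3 < -1 by linarith) (le_of_lt (inv_pos.2 hc₀)) (fun z hz => ?_) (fun z hz => ?_)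
  · have hz0 : 0 < z := hz.1
    rw [Real.norm_eq_abs, _root_.abs_of_nonneg (by positivity)]
    rw [div_le_iff₀ (by positivity)]
    calc z ^ (t-1) = c₀⁻¹ * z ^ (t-1) * c₀ := by field_simp
      _ ≤ c₀⁻¹ * z ^ (t-1) * (c₀ * (z ^ 2 + 1)) := by
          refine mul_le_mul_of_nonneg_left ?_ (by positivity)
          nlinarith [sq_nonneg z]
  · have hz1 : (1:ℝ) < z := hz
    have hz0 : 0 < z := lt_trans one_pos hz1
    rw [Real.norm_eq_abs, _root_.abs_of_nonneg (by positivity)]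
    rw [div_le_iff₀ (by positivity)]
    calc z ^ (t-1) = c₀⁻¹ * z ^ (t - 3) * (c₀ * z ^ 2) := by
          have h2 : z ^ (t-1) = z ^ (t - 3) * z ^ (2:ℝ) := by
            rw [← Real.rpow_add hz0]; ring_nf
          rw [h2, Real.rpow_two]; field_simp
      _ ≤ c₀⁻¹ * z ^ (t - 3) * (c₀ * (z ^ 2 + 1)) := by
          refine mul_le_mul_of_nonneg_left ?_ (by positivity)
          nlinarith
lemma hasDerivAt_ofReal_add (z : ℝ) (w : ℂ) :
    HasDerivAt (fun y : ℝ => (y : ℂ) + w) 1 z := by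
  simpa using ((hasDerivAt_id z).ofReal_comp).add_const w

lemma ibp {t : ℝ} (ht : 0 < t) (ht' : t < 1) {c₀ : ℝ} (hc₀ : 0 < c₀) {w : ℂ}
    (hw : ∀ z : ℝ, 0 ≤ z → c₀ * (z ^ 2 + 1) ≤ ‖((z : ℂ) + w)‖ ^ 2) :
    ∫ z in Ioi (0:ℝ), ((z ^ t : ℝ) : ℂ) / ((z : ℂ) + w) ^ 2 =
      (t : ℂ) * ∫ z in Ioi (0:ℝ), ((z ^ (t-1) : ℝ) : ℂ) / ((z : ℂ) + w) := by
  set g1 : ℝ → ℂ := fun z => ((z ^ t : ℝ) : ℂ) / ((z : ℂ) + w) ^ 2 with hg1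
  set g2 : ℝ → ℂ := fun z => ((z ^ (t-1) : ℝ) : ℂ) / ((z : ℂ) + w) with hg2
  have int1 : IntegrableOn g1 (Ioi 0) := integrableOn_sq (by linarith) ht' hc₀ hw
  have int2 : IntegrableOn g2 (Ioi 0) := integrableOn_one (by linarith) (by linarith) hc₀ hw
  set H : ℝ → ℂ := fun z => -(((z ^ t : ℝ) : ℂ) / ((z : ℂ) + w)) with hH
  set f' : ℝ → ℂ := fun z => g1 z - (t : ℂ) * g2 z with hf'
  have hne : ∀ z : ℝ, 0 ≤ z → (z : ℂ) + w ≠ 0 := fun z hz => denom_ne_zero hc₀ hw hz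
  have key : ∫ z in Ioi (0:ℝ), f' z = 0 - H 0 := by
    apply integral_Ioi_of_hasDerivAt_of_tendsto
    · apply ContinuousWithinAt.neg
      apply ContinuousWithinAt.div
      · exact (Complex.continuous_ofReal.continuousAt.comp
          (Real.continuousAt_rpow_const 0 t (Or.inr ht.le))).continuousWithinAt
      · exact ((Complex.continuous_ofReal.add continuous_const).continuousAt).continuousWithinAt
      · exact hne 0 le_rfl
    · intro z hz
      have hz0 : (0:ℝ) < z := hz
      have hA : HasDerivAt (fun y : ℝ => ((y ^ t : ℝ) : ℂ)) ((t * z ^ (t-1) : ℝ) : ℂ) z :=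
        (Real.hasDerivAt_rpow_const (Or.inl hz0.ne')).ofReal_comp
      have hB := hasDerivAt_ofReal_add z w
      have hD := (hA.div hB (hne z hz0.le)).neg
      convert hD using 1
      · rfl
      have hrel : ((z ^ t : ℝ) : ℂ) = ((z ^ (t-1) : ℝ) : ℂ) * (z : ℂ) := by
        rw [← Complex.ofReal_mul]
        norm_cast
        rw [show t = t - 1 + 1 by ring, Real.rpow_add_one hz0.ne']
        ring_nf
      simp only [hf', hg1, hg2]
      rw [hrel]
      push_cast
      have hne2 : (z:ℂ) + w ≠ 0 := hne z hz0.le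
      field_simp [hne2]
      ring
    · exact int1.sub (int2.const_mul _)
    · have hb : Tendsto (fun z : ℝ => (Real.sqrt c₀)⁻¹ * z ^ (t-1)) atTop (nhds 0) := by
        have := (tendsto_rpow_neg_atTop (show (0:ℝ) < 1 - t by linarith)).const_mul
          ((Real.sqrt c₀)⁻¹)
        simpa [mul_zero, show -(1-t) = t - 1 by ring] using this
      apply squeeze_zero_norm' _ hb
      filter_upwards [eventually_ge_atTop (1:ℝ)] with z hz1
      have hz0 : (0:ℝ) < z := lt_of_lt_of_le one_pos hz1
      have hs := Real.sqrt_pos.2 hc₀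
      have hub : Real.sqrt c₀ * z ≤ ‖((z : ℂ) + w)‖ := by
        have := sqrt_mul_le_abs hc₀ hw hz0.le
        rwa [max_eq_left hz1] at this
      have habs : 0 < ‖((z : ℂ) + w)‖ := lt_of_lt_of_le (by positivity) hub
      have hn : ‖H z‖ = z ^ t / ‖((z : ℂ) + w)‖ := by
        rw [hH]
        simp only [norm_neg]
        simpa using norm_integrand t w 1 hz0
      rw [hn, div_le_iff₀ habs]
      calc z ^ t = (Real.sqrt c₀)⁻¹ * z ^ (t-1) * (Real.sqrt c₀ * z) := by
            rw [Real.rpow_sub hz0]; field_simp; simp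
        _ ≤ (Real.sqrt c₀)⁻¹ * z ^ (t-1) * ‖((z : ℂ) + w)‖ :=
            mul_le_mul_of_nonneg_left hub (by positivity)
  have hH0 : H 0 = 0 := by
    simp [hH, Real.zero_rpow ht.ne']
  rw [hH0, sub_zero] at key
  have := MeasureTheory.integral_sub int1 (int2.const_mul (t:ℂ))
  rw [hf'] at key
  rw [integral_const_mul] at this
  rw [this] at key
  linear_combination key
lemma key_identity {t : ℝ} (ht : 0 < t) (ht' : t < 1) {c₀ : ℝ} (hc₀ : 0 < c₀) {w : ℂ}
    (hw : ∀ z : ℝ, 0 ≤ z → c₀ * (z ^ 2 + 1) ≤ ‖((z : ℂ) + w)‖ ^ 2) :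
    w * ∫ z in Ioi (0:ℝ), ((z ^ (t-1) : ℝ) : ℂ) / ((z : ℂ) + w) ^ 2 =
      (1 - (t:ℂ)) * ∫ z in Ioi (0:ℝ), ((z ^ (t-1) : ℝ) : ℂ) / ((z : ℂ) + w) := by
  have int1 : IntegrableOn (fun z : ℝ => ((z ^ t : ℝ) : ℂ) / ((z : ℂ) + w) ^ 2) (Ioi 0) :=
    integrableOn_sq (by linarith) ht' hc₀ hw
  have int2 : IntegrableOn (fun z : ℝ => ((z ^ (t-1) : ℝ) : ℂ) / ((z : ℂ) + w)) (Ioi 0) :=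
    integrableOn_one (by linarith) (by linarith) hc₀ hw
  rw [← integral_const_mul]
  have congr1 : ∫ z in Ioi (0:ℝ), w * (((z ^ (t-1) : ℝ) : ℂ) / ((z : ℂ) + w) ^ 2) =
      ∫ z in Ioi (0:ℝ), (((z ^ (t-1) : ℝ) : ℂ) / ((z : ℂ) + w)
        - ((z ^ t : ℝ) : ℂ) / ((z : ℂ) + w) ^ 2) := by
    apply setIntegral_congr_fun measurableSet_Ioi
    intro z hz
    have hz0 : (0:ℝ) < z := hz
    have hne : (z:ℂ) + w ≠ 0 := denom_ne_zero hc₀ hw hz0.le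
    have hrel : ((z ^ t : ℝ) : ℂ) = ((z ^ (t-1) : ℝ) : ℂ) * (z : ℂ) := by
      rw [← Complex.ofReal_mul]
      norm_cast
      rw [show t = t - 1 + 1 by ring, Real.rpow_add_one hz0.ne']
      ring_nf
    dsimp only
    rw [hrel]
    field_simp
    ring
  rw [congr1, MeasureTheory.integral_sub int2 int1, ibp ht ht' hc₀ hw]
  ring

lemma K_hasDerivAt {t : ℝ} (ht : 0 < t) (ht' : t < 1) {φ₀ : ℝ} (hφ₀ : φ₀ ∈ Ioo (-π) π) :
    HasDerivAt (fun φ : ℝ => ∫ z in Ioi (0:ℝ),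
        ((z ^ (t-1) : ℝ) : ℂ) / ((z : ℂ) + Complex.exp (φ * I)))
      (((t:ℂ) - 1) * I * ∫ z in Ioi (0:ℝ),
        ((z ^ (t-1) : ℝ) : ℂ) / ((z : ℂ) + Complex.exp (φ₀ * I))) φ₀ := by
  have hφ₀' : |φ₀| < π := abs_lt.2 ⟨hφ₀.1, hφ₀.2⟩
  set m : ℝ := (π + |φ₀|) / 2 with hm
  have hm1 : |φ₀| < m := by rw [hm]; linarith
  have hm2 : m < π := by rw [hm]; linarith
  have hm0 : 0 ≤ m := by rw [hm]; positivity
  have hc : -1 < Real.cos m := by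
    have := Real.strictAntiOn_cos ⟨hm0, hm2.le⟩ ⟨Real.pi_pos.le, le_rfl⟩ hm2
    rwa [Real.cos_pi] at this
  set c₀ : ℝ := 1 + min (Real.cos m) 0 with hc₀def
  have hc₀ : 0 < c₀ := by
    rcases le_or_gt (Real.cos m) 0 with h | h
    · rw [hc₀def, min_eq_left h]; linarith
    · rw [hc₀def, min_eq_right h.le]; linarith
  have hwφ : ∀ φ : ℝ, |φ| ≤ m → ∀ z : ℝ, 0 ≤ z →
      c₀ * (z ^ 2 + 1) ≤ ‖((z : ℂ) + Complex.exp (φ * I))‖ ^ 2 := by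
    intro φ hφ z hz
    have hcos : Real.cos m ≤ Real.cos φ := by
      have h := Real.cos_le_cos_of_nonneg_of_le_pi (abs_nonneg φ) hm2.le hφ
      rwa [Real.cos_abs] at h
    have h := abs_sq_lower hcos (zero_le_one (α := ℝ)) hz
    rw [hc₀def]
    simpa using h
  have hε : (0:ℝ) < m - |φ₀| := by linarith
  have hball : ∀ φ ∈ Metric.ball φ₀ (m - |φ₀|), |φ| ≤ m := by
    intro φ hφ
    rw [Metric.mem_ball, Real.dist_eq] at hφ
    have := abs_sub_abs_le_abs_sub φ φ₀
    linarith
  have main := hasDerivAt_integral_of_dominated_loc_of_deriv_le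
    (F := fun (φ : ℝ) (z : ℝ) => ((z ^ (t-1) : ℝ) : ℂ) / ((z : ℂ) + Complex.exp (φ * I)))
    (F' := fun (φ : ℝ) (z : ℝ) => (-(Complex.exp (φ * I) * I)) *
      (((z ^ (t-1) : ℝ) : ℂ) / ((z : ℂ) + Complex.exp (φ * I)) ^ 2))
    (μ := volume.restrict (Ioi 0)) (x₀ := φ₀)
    (bound := fun z => z ^ (t-1) / (c₀ * (z ^ 2 + 1))) (Metric.ball_mem_nhds φ₀ hε) ?_ ?_ ?_ ?_ ?_ ?_
  · have hval : (∫ z in Ioi (0:ℝ), (-(Complex.exp (φ₀ * I) * I)) *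
        (((z ^ (t-1) : ℝ) : ℂ) / ((z : ℂ) + Complex.exp (φ₀ * I)) ^ 2)) =
        ((t:ℂ) - 1) * I * ∫ z in Ioi (0:ℝ),
          ((z ^ (t-1) : ℝ) : ℂ) / ((z : ℂ) + Complex.exp (φ₀ * I)) := by
      rw [integral_const_mul]
      have keyid := key_identity ht ht' hc₀ (hwφ φ₀ hm1.le)
      calc (-(Complex.exp (φ₀ * I) * I)) * ∫ z in Ioi (0:ℝ),
            ((z ^ (t-1) : ℝ) : ℂ) / ((z : ℂ) + Complex.exp (φ₀ * I)) ^ 2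
          = -I * (Complex.exp (φ₀ * I) * ∫ z in Ioi (0:ℝ),
            ((z ^ (t-1) : ℝ) : ℂ) / ((z : ℂ) + Complex.exp (φ₀ * I)) ^ 2) := by ring
        _ = -I * ((1 - (t:ℂ)) * ∫ z in Ioi (0:ℝ),
            ((z ^ (t-1) : ℝ) : ℂ) / ((z : ℂ) + Complex.exp (φ₀ * I))) := by rw [keyid]
        _ = ((t:ℂ) - 1) * I * ∫ z in Ioi (0:ℝ),
            ((z ^ (t-1) : ℝ) : ℂ) / ((z : ℂ) + Complex.exp (φ₀ * I)) := by ring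
    rw [← hval]
    exact main.2
  · filter_upwards [eventually_of_mem (Metric.ball_mem_nhds φ₀ hε) (fun φ hφ => hball φ hφ)]
      with φ hφ
    simpa using meas_aux hc₀ (hwφ φ hφ) (t-1) 1
  · exact integrableOn_one (show (-1:ℝ) < t-1 by linarith) (by linarith) hc₀ (hwφ φ₀ hm1.le)
  · exact (meas_aux hc₀ (hwφ φ₀ hm1.le) (t-1) 2).const_mul _
  · filter_upwards [ae_restrict_mem measurableSet_Ioi] with z hz
    intro φ hφ
    have hz0 : (0:ℝ) < z := hz
    have hwz := hwφ φ (hball φ hφ)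
    rw [norm_mul, norm_neg, norm_mul]
    have h1 : ‖Complex.exp ((φ:ℂ) * I)‖ = 1 := Complex.norm_exp_ofReal_mul_I φ
    rw [h1, Complex.norm_I, one_mul, one_mul, norm_integrand (t-1) _ 2 hz0]
    exact div_le_div_of_nonneg_left (Real.rpow_nonneg hz0.le _) (by positivity) (hwz z hz0.le)
  · exact integrable_bound ht ht' hc₀
  · filter_upwards [ae_restrict_mem measurableSet_Ioi] with z hz
    intro φ hφ
    have hz0 : (0:ℝ) < z := hz
    have hE : HasDerivAt (fun φ : ℝ => Complex.exp (φ * I)) (Complex.exp (φ * I) * I) φ := by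
      have h1 : HasDerivAt (fun φ : ℝ => ((φ:ℂ) * I)) I φ := by
        simpa using ((hasDerivAt_id φ).ofReal_comp (f := fun x => x)).mul_const I
      simpa using h1.cexp
    have hg : HasDerivAt (fun φ : ℝ => (z:ℂ) + Complex.exp (φ * I))
        (Complex.exp (φ * I) * I) φ := hE.const_add _
    have hne : (z:ℂ) + Complex.exp (φ * I) ≠ 0 :=
      denom_ne_zero hc₀ (hwφ φ (hball φ hφ)) hz0.le
    have hD := (hasDerivAt_const φ ((z ^ (t-1) : ℝ) : ℂ)).div hg hne
    convert hD using 1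
    case e'_8 => rfl
    case e'_4 => rfl
    field_simp
    ring
lemma base_case {t : ℝ} (ht : 0 < t) (ht' : t < 1) :
    ∫ z in Ioi (0:ℝ), ((z ^ (t-1) : ℝ) : ℂ) / ((z : ℂ) + 1) =
      (π : ℂ) / Complex.sin (π * t) := by
  -- beta value
  have hre1 : (0:ℝ) < ((t:ℂ)).re := by simpa using ht
  have hre2 : (0:ℝ) < ((1:ℂ) - t).re := by
    simp only [Complex.sub_re, Complex.one_re, Complex.ofReal_re]; linarith
  have hbeta : Complex.betaIntegral t (1 - t) = (π : ℂ) / Complex.sin (π * t) := by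
    have h1 := Complex.Gamma_mul_Gamma_eq_betaIntegral hre1 hre2
    rw [show (t:ℂ) + (1 - t) = 1 by ring, Complex.Gamma_one, one_mul] at h1
    rw [← h1, Complex.Gamma_mul_Gamma_one_sub]
  -- betaIntegral = coerced real interval integral
  have hcongr : Complex.betaIntegral t (1 - t) =
      ((∫ x in (0:ℝ)..1, x ^ (t-1) * (1-x) ^ (-t) : ℝ) : ℂ) := by
    rw [Complex.betaIntegral, ← intervalIntegral.integral_ofReal]
    apply intervalIntegral.integral_congr
    intro x hx
    rw [uIcc_of_le zero_le_one] at hx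
    have hx0 : (0:ℝ) ≤ x := hx.1
    have hx1 : (0:ℝ) ≤ 1 - x := by linarith [hx.2]
    dsimp only
    rw [Complex.ofReal_mul, Complex.ofReal_cpow hx0, Complex.ofReal_cpow hx1]
    push_cast
    ring_nf
  -- real interval integral as Ioo integral
  have hIoo : (∫ x in (0:ℝ)..1, x ^ (t-1) * (1-x) ^ (-t) : ℝ) =
      ∫ x in Ioo (0:ℝ) 1, x ^ (t-1) * (1-x) ^ (-t) := by
    rw [intervalIntegral.integral_of_le zero_le_one, MeasureTheory.integral_Ioc_eq_integral_Ioo]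
  -- substitution x ↦ x / (1-x) maps Ioo 0 1 onto Ioi 0
  have hsub : ∫ y in Ioi (0:ℝ), y ^ (t-1) / (1 + y) =
      ∫ x in Ioo (0:ℝ) 1, x ^ (t-1) * (1-x) ^ (-t) := by
    have hderiv : ∀ x ∈ Ioo (0:ℝ) 1, HasDerivWithinAt (fun x : ℝ => x / (1 - x))
        (((1-x) ^ 2)⁻¹) (Ioo (0:ℝ) 1) x := by
      intro x hx
      have h1x : (0:ℝ) < 1 - x := by linarith [hx.2]
      have hD := ((hasDerivAt_id x).div ((hasDerivAt_id x).const_sub 1)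
        h1x.ne').hasDerivWithinAt (s := Ioo (0:ℝ) 1)
      convert hD using 1
      case e'_8 => rfl
      case e'_4 => rfl
      case e'_5 => rfl
      simp only [id_eq]
      field_simp
      ring
    have hinj : InjOn (fun x : ℝ => x / (1 - x)) (Ioo 0 1) := by
      intro x hx y hy h
      have h1x : (0:ℝ) < 1 - x := by linarith [hx.2]
      have h1y : (0:ℝ) < 1 - y := by linarith [hy.2]
      field_simp at h
      nlinarith [h]
    have himg : (fun x : ℝ => x / (1 - x)) '' Ioo 0 1 = Ioi 0 := by
      ext y
      constructor
      · rintro ⟨x, hx, rfl⟩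
        have h1x : (0:ℝ) < 1 - x := by linarith [hx.2]
        exact div_pos hx.1 h1x
      · intro hy
        have hy0 : (0:ℝ) < y := hy
        refine ⟨y / (1 + y), ⟨div_pos hy0 (by linarith), ?_⟩, ?_⟩
        · rw [div_lt_one (by linarith)]; linarith
        · dsimp only
          have h3 : 1 - y / (1 + y) = 1 / (1 + y) := by field_simp; ring
          rw [h3]
          field_simp
    have := integral_image_eq_integral_abs_deriv_smul measurableSet_Ioo hderiv hinj
      (fun y : ℝ => y ^ (t-1) / (1 + y))
    rw [himg] at this
    rw [this]
    apply setIntegral_congr_fun measurableSet_Ioo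
    intro x hx
    have hx0 : (0:ℝ) < x := hx.1
    have h1x : (0:ℝ) < 1 - x := by linarith [hx.2]
    have habs : |((1-x) ^ 2)⁻¹| = ((1-x) ^ 2)⁻¹ := abs_of_pos (by positivity)
    dsimp only
    rw [habs, smul_eq_mul]
    have h2 : 1 + x / (1-x) = 1 / (1-x) := by field_simp; ring
    rw [h2, Real.div_rpow hx0.le h1x.le]
    rw [Real.rpow_neg h1x.le, Real.rpow_sub h1x, Real.rpow_one]
    have ht1 : (1-x) ^ t ≠ 0 := (Real.rpow_pos_of_pos h1x t).ne'
    field_simp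
  -- complex integral = coerced real integral
  have hofreal : ∫ z in Ioi (0:ℝ), ((z ^ (t-1) : ℝ) : ℂ) / ((z : ℂ) + 1) =
      ((∫ z in Ioi (0:ℝ), z ^ (t-1) / (1 + z) : ℝ) : ℂ) := by
    have h0 : ((∫ z in Ioi (0:ℝ), z ^ (t-1) / (1 + z) : ℝ) : ℂ) =
        ∫ z in Ioi (0:ℝ), ((z ^ (t-1) / (1 + z) : ℝ) : ℂ) := integral_ofReal.symm
    rw [h0]
    apply setIntegral_congr_fun measurableSet_Ioi
    intro z _
    dsimp only
    push_cast
    rw [add_comm (1:ℂ)]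
  rw [hofreal, hsub, ← hIoo, ← hcongr, hbeta]
lemma hw_exists {r θ : ℝ} (hr : 0 < r) (hθ : θ ∈ Ioo (-π) π) :
    ∃ c₀ : ℝ, 0 < c₀ ∧ ∀ z : ℝ, 0 ≤ z →
      c₀ * (z ^ 2 + 1) ≤ ‖((z : ℂ) + r * Complex.exp (θ * I))‖ ^ 2 := by
  have hθ' : |θ| < π := abs_lt.2 ⟨hθ.1, hθ.2⟩
  have hc : -1 < Real.cos θ := by
    have h1 : Real.cos π < Real.cos |θ| := by
      rcases eq_or_lt_of_le (abs_nonneg θ) with h | h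
      · rw [← h, Real.cos_zero, Real.cos_pi]; norm_num
      · exact Real.strictAntiOn_cos ⟨(abs_nonneg θ), hθ'.le⟩ ⟨Real.pi_pos.le, le_rfl⟩ hθ'
    rw [Real.cos_pi, Real.cos_abs] at h1
    linarith
  set c₁ : ℝ := 1 + min (Real.cos θ) 0 with hc₁
  have hc₁pos : 0 < c₁ := by
    rcases le_or_gt (Real.cos θ) 0 with h | h
    · rw [hc₁, min_eq_left h]; linarith
    · rw [hc₁, min_eq_right h.le]; linarith
  refine ⟨c₁ * min (r ^ 2) 1, by positivity, fun z hz => ?_⟩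
  have h1 := abs_sq_lower (le_refl (Real.cos θ)) hr.le hz
  have h2 : min (r ^ 2) 1 * (z ^ 2 + 1) ≤ z ^ 2 + r ^ 2 := by
    rcases min_cases (r ^ 2) 1 with ⟨hm, hm'⟩ | ⟨hm, hm'⟩ <;> rw [hm] <;> nlinarith [sq_nonneg z]
  calc c₁ * min (r ^ 2) 1 * (z ^ 2 + 1) = c₁ * (min (r ^ 2) 1 * (z ^ 2 + 1)) := by ring
    _ ≤ c₁ * (z ^ 2 + r ^ 2) := mul_le_mul_of_nonneg_left h2 hc₁pos.le
    _ ≤ _ := h1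

lemma unit_integral {t : ℝ} (ht : 0 < t) (ht' : t < 1) {θ : ℝ} (hθ : θ ∈ Ioo (-π) π) :
    ∫ z in Ioi (0:ℝ), ((z ^ (t-1) : ℝ) : ℂ) / ((z : ℂ) + Complex.exp (θ * I)) =
      (π : ℂ) / Complex.sin (π * t) * Complex.exp (((t:ℂ) - 1) * θ * I) := by
  set K : ℝ → ℂ := fun φ => ∫ z in Ioi (0:ℝ),
    ((z ^ (t-1) : ℝ) : ℂ) / ((z : ℂ) + Complex.exp (φ * I)) with hKdef
  have hG : ∀ φ ∈ uIcc (0:ℝ) θ,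
      HasDerivAt (fun φ : ℝ => K φ * Complex.exp (-((t:ℂ) - 1) * φ * I)) 0 φ := by
    intro φ hφ
    have hφIoo : φ ∈ Ioo (-π) π := by
      rw [mem_uIcc] at hφ
      constructor <;> rcases hφ with ⟨h1, h2⟩ | ⟨h1, h2⟩ <;>
        linarith [hθ.1, hθ.2, Real.pi_pos]
    have h1 := K_hasDerivAt ht ht' hφIoo
    have h3 : HasDerivAt (fun φ : ℝ => (-((t:ℂ)-1) * φ * I)) (-((t:ℂ)-1) * I) φ := by
      have := (((hasDerivAt_id φ).ofReal_comp (f := fun x => x)).const_mul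
        (-((t:ℂ)-1))).mul_const I
      simpa [mul_comm, mul_assoc] using this
    have h2 := h3.cexp
    have hprod := h1.mul h2
    convert hprod using 1
    case e'_8 => rfl
    case e'_4 => rfl
    ring
  have hint := intervalIntegral.integral_eq_sub_of_hasDerivAt hG
    (intervalIntegrable_const (c := (0:ℂ)))
  rw [intervalIntegral.integral_zero] at hint
  have hf := sub_eq_zero.mp hint.symm
  simp only [Complex.ofReal_zero, mul_zero, zero_mul, Complex.exp_zero, mul_one] at hf
  have hK0 : K 0 = (π : ℂ) / Complex.sin (π * t) := by
    rw [hKdef]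
    have := base_case ht ht'
    simpa using this
  rw [hK0] at hf
  have hEmul : Complex.exp (-((t:ℂ)-1) * θ * I) * Complex.exp (((t:ℂ)-1) * θ * I) = 1 := by
    rw [← Complex.exp_add, show -((t:ℂ)-1) * θ * I + ((t:ℂ)-1) * θ * I = 0 by ring,
      Complex.exp_zero]
  calc K θ = K θ * (Complex.exp (-((t:ℂ)-1) * θ * I) * Complex.exp (((t:ℂ)-1) * θ * I)) := by
        rw [hEmul, mul_one]
    _ = (K θ * Complex.exp (-((t:ℂ)-1) * θ * I)) * Complex.exp (((t:ℂ)-1) * θ * I) := by ring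
    _ = (π : ℂ) / Complex.sin (π * t) * Complex.exp (((t:ℂ)-1) * θ * I) := by rw [hf]

lemma rotated_integral {t : ℝ} (ht : 0 < t) (ht' : t < 1) {r θ : ℝ} (hr : 0 < r)
    (hθ : θ ∈ Ioo (-π) π) :
    ∫ z in Ioi (0:ℝ), ((z ^ (t-1) : ℝ) : ℂ) / ((z : ℂ) + r * Complex.exp (θ * I)) =
      (π : ℂ) / Complex.sin (π * t) * ((r ^ (t-1) : ℝ) : ℂ) *
        Complex.exp (((t:ℂ) - 1) * θ * I) := by
  have hcomp := integral_comp_mul_left_Ioi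
    (g := fun y : ℝ => ((y ^ (t-1) : ℝ) : ℂ) / ((y : ℂ) + r * Complex.exp (θ * I))) 0 hr
  rw [mul_zero] at hcomp
  have hrC : (r : ℂ) ≠ 0 := Complex.ofReal_ne_zero.2 hr.ne'
  have hcongr : (∫ x in Ioi (0:ℝ),
      (((r * x) ^ (t-1) : ℝ) : ℂ) / (((r * x : ℝ) : ℂ) + r * Complex.exp (θ * I))) =
      ((r ^ (t-2) : ℝ) : ℂ) * ∫ x in Ioi (0:ℝ),
        ((x ^ (t-1) : ℝ) : ℂ) / ((x : ℂ) + Complex.exp (θ * I)) := by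
    rw [← integral_const_mul]
    apply setIntegral_congr_fun measurableSet_Ioi
    intro x hx
    have hx0 : (0:ℝ) < x := hx
    dsimp only
    have hmul : ((r * x) ^ (t-1) : ℝ) = (r ^ (t-1)) * (x ^ (t-1)) :=
      Real.mul_rpow hr.le hx0.le
    have hr1 : (r ^ (t-1) : ℝ) = r ^ (t-2) * r := by
      rw [show t - 1 = t - 2 + 1 by ring, Real.rpow_add_one hr.ne']
    have hden : ((r * x : ℝ) : ℂ) + r * Complex.exp (θ * I) =
        (r : ℂ) * ((x : ℂ) + Complex.exp (θ * I)) := by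
      push_cast; ring
    rw [hmul, hr1, hden]
    rcases eq_or_ne ((x:ℂ) + Complex.exp (θ * I)) 0 with hd | hd
    · rw [hd]; simp
    · push_cast
      field_simp
  have h2 : (r:ℝ) • (∫ x in Ioi (0:ℝ),
      (((r * x) ^ (t-1) : ℝ) : ℂ) / (((r * x : ℝ) : ℂ) + r * Complex.exp (θ * I))) =
      ∫ z in Ioi (0:ℝ), ((z ^ (t-1) : ℝ) : ℂ) / ((z : ℂ) + r * Complex.exp (θ * I)) := by
    have hc' : (∫ x in Ioi (0:ℝ),
        (((r * x) ^ (t-1) : ℝ) : ℂ) / (((r * x : ℝ) : ℂ) + r * Complex.exp (θ * I))) =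
        (∫ x in Ioi (0:ℝ), (fun y : ℝ => ((y ^ (t-1) : ℝ) : ℂ) /
          ((y : ℂ) + r * Complex.exp (θ * I))) (r * x)) := by
      apply setIntegral_congr_fun measurableSet_Ioi
      intro x _
      norm_num
    rw [hc', hcomp, smul_smul, mul_inv_cancel₀ hr.ne', one_smul]
  rw [← h2, hcongr, unit_integral ht ht' hθ, Complex.real_smul]
  rw [show ((r:ℂ) * (((r ^ (t-2) : ℝ) : ℂ) * ((π : ℂ) / Complex.sin (π * t) *
    Complex.exp (((t:ℂ) - 1) * θ * I)))) = (((r : ℂ) * ((r ^ (t-2) : ℝ) : ℂ)) *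
    ((π : ℂ) / Complex.sin (π * t) * Complex.exp (((t:ℂ) - 1) * θ * I))) by ring]
  have hr2 : (r : ℂ) * ((r ^ (t-2) : ℝ) : ℂ) = ((r ^ (t-1) : ℝ) : ℂ) := by
    rw [← Complex.ofReal_mul]
    congr 1
    rw [show t - 1 = t - 2 + 1 by ring, Real.rpow_add_one hr.ne']
    ring
  rw [hr2]
  ring
lemma exp_add_exp_neg_mul_I (x : ℝ) :
    Complex.exp (x * I) + Complex.exp (-x * I) = 2 * (Real.cos x : ℂ) := by
  rw [show (-(x:ℂ) * I) = ((-x : ℝ) : ℂ) * I by push_cast; ring]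
  rw [Complex.exp_mul_I, Complex.exp_mul_I]
  rw [← Complex.ofReal_cos, ← Complex.ofReal_sin, ← Complex.ofReal_cos, ← Complex.ofReal_sin]
  push_cast [Real.cos_neg, Real.sin_neg]
  ring

lemma exp_sub_exp_neg_mul_I (x : ℝ) :
    Complex.exp (x * I) - Complex.exp (-x * I) = 2 * I * (Real.sin x : ℂ) := by
  rw [show (-(x:ℂ) * I) = ((-x : ℝ) : ℂ) * I by push_cast; ring]
  rw [Complex.exp_mul_I, Complex.exp_mul_I]
  rw [← Complex.ofReal_cos, ← Complex.ofReal_sin, ← Complex.ofReal_cos, ← Complex.ofReal_sin]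
  push_cast [Real.cos_neg, Real.sin_neg]
  ring

set_option maxHeartbeats 1000000 in
lemma final_alg (A L Sa S1 Pi R E Sn : ℂ) (hA : A ≠ 0) (hL : L ≠ 0) (hSa : Sa ≠ 0)
    (hS1 : S1 ≠ 0) :
    A⁻¹ * (L * (2 * I * Sa))⁻¹ * (Pi / S1 * R * (L * E * (2 * I * Sn))) =
      Pi * (R * E) * Sn / (A * Sa * S1) := by
  have e1 : L * L⁻¹ = 1 := mul_inv_cancel₀ hL
  have e2 : I * I⁻¹ = 1 := mul_inv_cancel₀ Complex.I_ne_zero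
  have e3 : A * A⁻¹ = 1 := mul_inv_cancel₀ hA
  have e4 : Sa * Sa⁻¹ = 1 := mul_inv_cancel₀ hSa
  have e5 : S1 * S1⁻¹ = 1 := mul_inv_cancel₀ hS1
  field_simp

theorem stmt_7 (α β : ℝ) (hα : α ∈ Set.Ioo (0 : ℝ) 1) (hβ : β ∈ Set.Ioo (1 : ℝ) (1 + α))
    (lam : ℂ) (hlam : lam ≠ 0) (harg : lam.arg ∈ Set.Ioo (-(π * α)) (π * α)) :
    (∫ v in Set.Ioi (0 : ℝ),
        ((v ^ (2 * α - β) : ℝ) : ℂ) /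
          (((v ^ (2 * α) : ℝ) : ℂ) - 2 * lam * ((v ^ α : ℝ) : ℂ) * (Real.cos (α * π) : ℝ) +
            lam ^ 2)) =
      (π : ℂ) * lam ^ (((1 - β) / α : ℝ) : ℂ) *
          (Real.sin (π * (β - α + (1 - β) / α)) : ℝ) /
        ((α : ℂ) * (Real.sin (π * α) : ℝ) * (Real.sin (π * (β - 1) / α) : ℝ)) := by
  obtain ⟨hα0, hα1⟩ := hα
  obtain ⟨hβ1, hβα⟩ := hβ
  have hπ := Real.pi_pos
  set a : ℝ := lam.arg with hadef
  set r : ℝ := ‖lam‖ with hrdef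
  have hr : 0 < r := norm_pos_iff.mpr hlam
  set γ : ℝ := (1 - β) / α with hγdef
  have hαγ : α * γ = 1 - β := by rw [hγdef]; field_simp
  have hγ1 : -1 < γ := by
    rw [hγdef, lt_div_iff₀ hα0]; linarith
  have hγ0 : γ < 0 := div_neg_of_neg_of_pos (by linarith) hα0
  have ht : (0:ℝ) < 1 + γ := by linarith
  have ht' : 1 + γ < 1 := by linarith
  set θ₁ : ℝ := a + α * π - π with hθ₁def
  set θ₂ : ℝ := a - α * π + π with hθ₂def
  have ha1 : -(π * α) < a := harg.1
  have ha2 : a < π * α := harg.2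
  have hθ₁Ioo : θ₁ ∈ Ioo (-π) π := by
    constructor <;> rw [hθ₁def] <;> nlinarith
  have hθ₂Ioo : θ₂ ∈ Ioo (-π) π := by
    constructor <;> rw [hθ₂def] <;> nlinarith
  set μ₁ : ℂ := lam * Complex.exp ((α * π : ℝ) * I) with hμ₁def
  set μ₂ : ℂ := lam * Complex.exp (-(α * π : ℝ) * I) with hμ₂def
  set w₁ : ℂ := (r : ℂ) * Complex.exp ((θ₁ : ℝ) * I) with hw₁def
  set w₂ : ℂ := (r : ℂ) * Complex.exp ((θ₂ : ℝ) * I) with hw₂def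
  have hlamexp : (r : ℂ) * Complex.exp ((a : ℝ) * I) = lam := Complex.norm_mul_exp_arg_mul_I lam
  have hw₁eq : w₁ = -μ₁ := by
    rw [hw₁def, hμ₁def, ← hlamexp]
    rw [show ((θ₁ : ℝ) : ℂ) * I = (a : ℝ) * I + ((α * π : ℝ) * I + -((π:ℝ) * I)) by
      rw [hθ₁def]; push_cast; ring]
    rw [Complex.exp_add, Complex.exp_add, Complex.exp_neg]
    rw [show ((π:ℝ) : ℂ) * I = (π:ℂ) * I by norm_num, Complex.exp_pi_mul_I]
    field_simp
  have hw₂eq : w₂ = -μ₂ := by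
    rw [hw₂def, hμ₂def, ← hlamexp]
    rw [show ((θ₂ : ℝ) : ℂ) * I = (a : ℝ) * I + (-(α * π : ℝ) * I + ((π:ℝ) * I)) by
      rw [hθ₂def]; push_cast; ring]
    rw [Complex.exp_add, Complex.exp_add]
    rw [show ((π:ℝ) : ℂ) * I = (π:ℂ) * I by norm_num, Complex.exp_pi_mul_I]
    ring
  obtain ⟨c₁, hc₁, hw₁⟩ := hw_exists hr hθ₁Ioo
  obtain ⟨c₂, hc₂, hw₂⟩ := hw_exists hr hθ₂Ioo
  rw [← hw₁def] at hw₁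
  rw [← hw₂def] at hw₂
  have hsin_απ : 0 < Real.sin (α * π) := by
    apply Real.sin_pos_of_pos_of_lt_pi <;> nlinarith
  have hdiff : μ₁ - μ₂ = lam * (2 * I * (Real.sin (α * π) : ℂ)) := by
    rw [hμ₁def, hμ₂def, ← mul_sub, exp_sub_exp_neg_mul_I]
  have hm : μ₁ - μ₂ ≠ 0 := by
    rw [hdiff]
    apply mul_ne_zero hlam
    apply mul_ne_zero (mul_ne_zero two_ne_zero Complex.I_ne_zero)
    exact_mod_cast hsin_απ.ne'
  have hαC : (α : ℂ) ≠ 0 := Complex.ofReal_ne_zero.2 hα0.ne'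
  set g : ℝ → ℂ := fun u => (α : ℂ)⁻¹ * (μ₁ - μ₂)⁻¹ *
    (μ₁ * (((u ^ γ : ℝ) : ℂ) / ((u : ℂ) + w₁)) - μ₂ * (((u ^ γ : ℝ) : ℂ) / ((u : ℂ) + w₂)))
    with hgdef
  -- step 1: rewrite the integrand
  have hsum : μ₁ + μ₂ = 2 * lam * ((Real.cos (α * π) : ℝ) : ℂ) := by
    rw [hμ₁def, hμ₂def, ← mul_add, exp_add_exp_neg_mul_I]
    ring
  have hprod : μ₁ * μ₂ = lam ^ 2 := by
    rw [hμ₁def, hμ₂def]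
    rw [show lam * Complex.exp ((α * π : ℝ) * I) * (lam * Complex.exp (-(α * π : ℝ) * I)) =
      lam ^ 2 * (Complex.exp ((α * π : ℝ) * I + -(α * π : ℝ) * I)) by
        rw [Complex.exp_add]; ring]
    rw [show ((α * π : ℝ) : ℂ) * I + -(α * π : ℝ) * I = 0 by ring, Complex.exp_zero, mul_one]
  have hstep : ∀ v ∈ Ioi (0:ℝ), ((v ^ (2 * α - β) : ℝ) : ℂ) /
      (((v ^ (2 * α) : ℝ) : ℂ) - 2 * lam * ((v ^ α : ℝ) : ℂ) * ((Real.cos (α * π) : ℝ) : ℂ) +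
        lam ^ 2) = (|α| * v ^ (α - 1)) • g (v ^ α) := by
    intro v hv
    have hv0 : (0:ℝ) < v := hv
    set u : ℝ := v ^ α with hudef
    have hu : 0 < u := Real.rpow_pos_of_pos hv0 α
    have hd₁ : (u : ℂ) + w₁ ≠ 0 := denom_ne_zero hc₁ hw₁ hu.le
    have hd₂ : (u : ℂ) + w₂ ≠ 0 := denom_ne_zero hc₂ hw₂ hu.le
    have hD : ((v ^ (2 * α) : ℝ) : ℂ) - 2 * lam * ((u : ℝ) : ℂ) *
        ((Real.cos (α * π) : ℝ) : ℂ) + lam ^ 2 = ((u : ℂ) + w₁) * ((u : ℂ) + w₂) := by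
      have h2α : (v ^ (2 * α) : ℝ) = u ^ 2 := by
        rw [hudef, show 2 * α = α * 2 by ring, Real.rpow_mul hv0.le, Real.rpow_two]
      rw [h2α, hw₁eq, hw₂eq, Complex.ofReal_pow]
      linear_combination (u:ℂ) * hsum - hprod
    have hnum : (v ^ (2 * α - β) : ℝ) = v ^ (α - 1) * u ^ γ * u := by
      rw [hudef, ← Real.rpow_mul hv0.le, ← Real.rpow_add hv0, ← Real.rpow_add hv0]
      congr 1
      rw [hγdef]
      field_simp
      ring
    have hd₁' : (u : ℂ) + -μ₁ ≠ 0 := by rw [← hw₁eq]; exact hd₁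
    have hd₂' : (u : ℂ) + -μ₂ ≠ 0 := by rw [← hw₂eq]; exact hd₂
    rw [hD, hw₁eq, hw₂eq, hgdef]
    dsimp only
    rw [hw₁eq, hw₂eq, abs_of_pos hα0, Complex.real_smul, hnum]
    push_cast
    field_simp
    try ring
  -- step 2: change variables
  have hLHS : (∫ v in Ioi (0:ℝ), ((v ^ (2 * α - β) : ℝ) : ℂ) /
      (((v ^ (2 * α) : ℝ) : ℂ) - 2 * lam * ((v ^ α : ℝ) : ℂ) * ((Real.cos (α * π) : ℝ) : ℂ) +
        lam ^ 2)) = ∫ u in Ioi (0:ℝ), g u := by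
    rw [setIntegral_congr_fun measurableSet_Ioi hstep]
    exact integral_comp_rpow_Ioi g hα0.ne'
  -- step 3: linearity
  have hf₁ : IntegrableOn (fun u : ℝ => ((u ^ γ : ℝ) : ℂ) / ((u : ℂ) + w₁)) (Ioi 0) :=
    integrableOn_one hγ1 hγ0 hc₁ hw₁
  have hf₂ : IntegrableOn (fun u : ℝ => ((u ^ γ : ℝ) : ℂ) / ((u : ℂ) + w₂)) (Ioi 0) :=
    integrableOn_one hγ1 hγ0 hc₂ hw₂
  have hlin : ∫ u in Ioi (0:ℝ), g u = (α : ℂ)⁻¹ * (μ₁ - μ₂)⁻¹ *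
      (μ₁ * (∫ u in Ioi (0:ℝ), ((u ^ γ : ℝ) : ℂ) / ((u : ℂ) + w₁)) -
       μ₂ * (∫ u in Ioi (0:ℝ), ((u ^ γ : ℝ) : ℂ) / ((u : ℂ) + w₂))) := by
    rw [← integral_const_mul, ← integral_const_mul,
      ← MeasureTheory.integral_sub ((hf₁.const_mul μ₁)) ((hf₂.const_mul μ₂)),
      ← integral_const_mul]
  -- step 4: evaluate the two integrals
  have hJ₁ := rotated_integral (t := 1 + γ) ht ht' hr hθ₁Ioo
  have hJ₂ := rotated_integral (t := 1 + γ) ht ht' hr hθ₂Ioo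
  rw [show (1:ℝ) + γ - 1 = γ by ring] at hJ₁ hJ₂
  rw [show ((1 + γ : ℝ) : ℂ) - 1 = (γ : ℂ) by push_cast; ring] at hJ₁ hJ₂
  rw [← hw₁def] at hJ₁
  rw [← hw₂def] at hJ₂
  -- step 5: final algebra
  set x : ℝ := α * π + γ * (α * π) - γ * π with hxdef
  have hE₁ : μ₁ * Complex.exp ((γ:ℂ) * (θ₁:ℝ) * I) =
      lam * (Complex.exp (((γ * a : ℝ) : ℂ) * I) * Complex.exp ((x : ℝ) * I)) := by
    rw [hμ₁def, mul_assoc, ← Complex.exp_add, ← Complex.exp_add]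
    congr 1
    rw [hθ₁def, hxdef]
    push_cast
    ring
  have hE₂ : μ₂ * Complex.exp ((γ:ℂ) * (θ₂:ℝ) * I) =
      lam * (Complex.exp (((γ * a : ℝ) : ℂ) * I) * Complex.exp (-(x : ℝ) * I)) := by
    rw [hμ₂def, mul_assoc, ← Complex.exp_add, ← Complex.exp_add]
    congr 1
    rw [hθ₂def, hxdef]
    push_cast
    ring
  have hcpow : lam ^ ((γ : ℝ) : ℂ) = ((r ^ γ : ℝ) : ℂ) * Complex.exp (((γ * a : ℝ) : ℂ) * I) := by
    rw [Complex.cpow_def_of_ne_zero hlam,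
      show Complex.log lam = ((Real.log r : ℝ) : ℂ) + ((a : ℝ) : ℂ) * I from rfl]
    rw [show (((Real.log r : ℝ) : ℂ) + ((a : ℝ) : ℂ) * I) * ((γ:ℝ):ℂ) =
      ((γ * Real.log r : ℝ) : ℂ) + ((γ * a : ℝ) : ℂ) * I by push_cast; ring]
    rw [Complex.exp_add, ← Complex.ofReal_exp]
    congr 2
    rw [Real.rpow_def_of_pos hr, mul_comm]
  -- real sine identities
  have hs1 : Real.sin (π * (β - 1) / α) = Real.sin (π * (1 + γ)) := by
    rw [show π * (1 + γ) = π + π * γ by ring, Real.sin_add, Real.sin_pi, Real.cos_pi]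
    rw [show π * (β - 1) / α = -(π * γ) by rw [hγdef]; field_simp; ring]
    rw [Real.sin_neg]
    ring
  have hsx : Real.sin x = Real.sin (π * (β - α + γ)) := by
    rw [hxdef, show α * π + γ * (α * π) - γ * π = π - π * (β - α + γ) by
      linear_combination (π : ℝ) * hαγ]
    exact Real.sin_pi_sub _
  have hs1pos : 0 < Real.sin (π * (1 + γ)) := by
    apply Real.sin_pos_of_pos_of_lt_pi
    · exact mul_pos hπ ht
    · nlinarith [mul_pos hπ (neg_pos.2 hγ0)]
  have hsinC : Complex.sin ((π:ℂ) * ((1 + γ : ℝ) : ℂ)) = ((Real.sin (π * (1 + γ)) : ℝ) : ℂ) := by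
    rw [show ((π:ℂ) * ((1 + γ : ℝ) : ℂ)) = ((π * (1 + γ) : ℝ) : ℂ) by push_cast; ring]
    exact (Complex.ofReal_sin _).symm
  rw [hLHS, hlin, hJ₁, hJ₂, hdiff]
  have hmain : μ₁ * ((π : ℂ) / Complex.sin (↑π * ↑(1 + γ)) * ((r ^ γ : ℝ) : ℂ) *
      Complex.exp ((γ:ℂ) * (θ₁:ℝ) * I)) - μ₂ * ((π : ℂ) / Complex.sin (↑π * ↑(1 + γ)) *
      ((r ^ γ : ℝ) : ℂ) * Complex.exp ((γ:ℂ) * (θ₂:ℝ) * I)) =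
      (π : ℂ) / Complex.sin (↑π * ↑(1 + γ)) * ((r ^ γ : ℝ) : ℂ) *
        (lam * Complex.exp (((γ * a : ℝ) : ℂ) * I) * (2 * I * ((Real.sin x : ℝ) : ℂ))) := by
    rw [show (π : ℂ) / Complex.sin (↑π * ↑(1 + γ)) * ((r ^ γ : ℝ) : ℂ) *
        (lam * Complex.exp (((γ * a : ℝ) : ℂ) * I) * (2 * I * ((Real.sin x : ℝ) : ℂ))) =
      (π : ℂ) / Complex.sin (↑π * ↑(1 + γ)) * ((r ^ γ : ℝ) : ℂ) *
        (lam * Complex.exp (((γ * a : ℝ) : ℂ) * I) *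
          (Complex.exp ((x:ℝ) * I) - Complex.exp (-(x:ℝ) * I))) by
        rw [exp_sub_exp_neg_mul_I]]
    rw [show (π : ℂ) / Complex.sin (↑π * ↑(1 + γ)) * ((r ^ γ : ℝ) : ℂ) *
        (lam * Complex.exp (((γ * a : ℝ) : ℂ) * I) *
          (Complex.exp ((x:ℝ) * I) - Complex.exp (-(x:ℝ) * I))) =
      (π : ℂ) / Complex.sin (↑π * ↑(1 + γ)) * ((r ^ γ : ℝ) : ℂ) *
        ((lam * (Complex.exp (((γ * a : ℝ) : ℂ) * I) * Complex.exp ((x:ℝ) * I))) -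
         (lam * (Complex.exp (((γ * a : ℝ) : ℂ) * I) * Complex.exp (-(x:ℝ) * I)))) by ring]
    rw [← hE₁, ← hE₂]
    ring
  rw [hmain, hsinC, hcpow]
  rw [show Real.sin (π * α) = Real.sin (α * π) by rw [mul_comm]]
  rw [hs1, hsx]
  have hsaC : ((Real.sin (α * π) : ℝ) : ℂ) ≠ 0 := by exact_mod_cast hsin_απ.ne'
  have hs1C : ((Real.sin (π * (1 + γ)) : ℝ) : ℂ) ≠ 0 := by exact_mod_cast hs1pos.ne'
  exact final_alg _ _ _ _ _ _ _ _ hαC hlam hsaC hs1C
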